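/- Let L ≥ 3 be an integer and let μ be a real-valued function on the nonempty proper subsets of {1,…,L} such that μ({i}) ≥ 0 for every i and μ satisfies the ABCMI condition. Define r_i = Σ_𝒦 J_i(𝒦), the sum over all nonempty proper subsets 𝒦 of {1,…,L}. Then: (a) r_i ≥ 0 for every i; (b) for every subset 𝒮 ⊂ {1,…,L} with 1 ≤ |𝒮| ≤ L−2, Σ_{i∈𝒮} r_i ≥ Σ_{∅≠𝒦⊆𝒮} μ(𝒦); and (c) for every subset 𝒮 ⊂ {1,…,L} with |𝒮| = L−1, Σ_{i∈𝒮} r_i = Σ_{∅≠𝒦⊆𝒮} μ(𝒦). -/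

import Mathlib

open Finset

/-- The contribution `J_i(𝒦)` from atom `a(𝒦)` to rate `r_i`. -/
noncomputable def J (L : ℕ) (μ : Finset (Fin L) → ℝ) (i : Fin L) (𝒦 : Finset (Fin L)) : ℝ :=
  if i ∈ 𝒦 then ((L : ℝ) - 𝒦.card) / ((L : ℝ) - 1) * μ 𝒦
  else -(((𝒦.card : ℝ) - 1) / ((L : ℝ) - 1)) * μ 𝒦

/-- The largest measure `μ̄_K` among atoms of weight `K`. -/
noncomputable def muMax (L : ℕ) (μ : Finset (Fin L) → ℝ) (K : ℕ) : ℝ :=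
  sSup {x : ℝ | ∃ 𝒦 : Finset (Fin L), 𝒦.card = K ∧ μ 𝒦 = x}

/-- The smallest measure `μ̲_K` among atoms of weight `K`. -/
noncomputable def muMin (L : ℕ) (μ : Finset (Fin L) → ℝ) (K : ℕ) : ℝ :=
  sInf {x : ℝ | ∃ 𝒦 : Finset (Fin L), 𝒦.card = K ∧ μ 𝒦 = x}

/-- `α(L,S,K) = S·C(L−1,K) − (S−K)·C(S,K)`. -/
def alphaC (L S K : ℕ) : ℤ :=
  (S : ℤ) * ((L - 1).choose K : ℤ) - ((S : ℤ) - (K : ℤ)) * (S.choose K : ℤ)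

/-- `β(L,S,K) = S·C(L−1,K) − (L−1)·C(S,K)`. -/
def betaC (L S K : ℕ) : ℤ :=
  (S : ℤ) * ((L - 1).choose K : ℤ) - ((L : ℤ) - 1) * (S.choose K : ℤ)

/-- The almost balanced conditional mutual information (ABCMI) condition. -/
noncomputable def ABCMI (L : ℕ) (μ : Finset (Fin L) → ℝ) : Prop :=
  muMax L μ (L - 1) ≤ muMin L μ (L - 1) * (1 + 1 / ((L : ℝ) - 2)) ∧
  ∀ K : ℕ, 2 ≤ K → K ≤ L - 2 →
    muMax L μ K ≤ muMin L μ K * (1 + (1 / ((K : ℝ) - 1)) *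
      sInf {x : ℝ | ∃ S : ℕ, K ≤ S ∧ S ≤ L - 2 ∧
        x = (betaC L S K : ℝ) / (alphaC L S K : ℝ)})

/-- The rate `r_i`, a sum of contributions over all nonempty proper subsets of `{1,…,L}`. -/
noncomputable def r (L : ℕ) (μ : Finset (Fin L) → ℝ) (i : Fin L) : ℝ :=
  ∑ 𝒦 ∈ Finset.univ.filter
      (fun 𝒦 : Finset (Fin L) => 𝒦 ≠ ∅ ∧ 𝒦 ≠ Finset.univ), J L μ i 𝒦

open Finset

lemma pascal' {L K : ℕ} (hL : 1 ≤ L) (hK : 1 ≤ K) :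
    L.choose K = (L-1).choose (K-1) + (L-1).choose K := by
  obtain ⟨l, rfl⟩ := Nat.exists_eq_add_of_le hL
  obtain ⟨k, rfl⟩ := Nat.exists_eq_add_of_le hK
  simp [Nat.add_comm 1, Nat.choose_succ_succ]

lemma mul_choose' {n k : ℕ} (hn : 1 ≤ n) (hk : 1 ≤ k) :
    n * (n-1).choose (k-1) = n.choose k * k := by
  obtain ⟨l, rfl⟩ := Nat.exists_eq_add_of_le hn
  obtain ⟨m, rfl⟩ := Nat.exists_eq_add_of_le hk
  simpa [Nat.add_comm 1] using Nat.add_one_mul_choose_eq l m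

lemma choose_strict {r a b : ℕ} (hr : 1 ≤ r) (hra : r ≤ a) (hab : a < b) :
    a.choose r < b.choose r := by
  have h1 : a.choose r < (a+1).choose r := by
    have := pascal' (L := a+1) (K := r) (by omega) hr
    have hpos : 0 < a.choose (r-1) := Nat.choose_pos (by omega)
    simp only [Nat.add_sub_cancel] at this
    omega
  exact lt_of_lt_of_le h1 (Nat.choose_le_choose r (by omega))

lemma betaC_pos {L S K : ℕ} (hL : 3 ≤ L) (hK : 2 ≤ K) (hKS : K ≤ S) (hS : S ≤ L - 2) :
    0 < betaC L S K := by
  have hnat : (L-1) * S.choose K < S * (L-1).choose K := by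
    have h1 : S * (S-1).choose (K-1) = S.choose K * K := mul_choose' (by omega) (by omega)
    have h2 : (L-1) * (L-2).choose (K-1) = (L-1).choose K * K := by
      have := mul_choose' (n := L-1) (k := K) (by omega) (by omega)
      simpa [show L - 1 - 1 = L - 2 by omega] using this
    have h3 : (S-1).choose (K-1) < (L-2).choose (K-1) :=
      choose_strict (by omega) (by omega) (by omega)
    have h4 : (L-1) * (S * (S-1).choose (K-1)) < S * ((L-1) * (L-2).choose (K-1)) := by
      have hpos : 0 < (L-1)*S := Nat.mul_pos (by omega) (by omega)
      calc (L-1) * (S * (S-1).choose (K-1)) = (L-1)*S * (S-1).choose (K-1) := by ring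
        _ < (L-1)*S * (L-2).choose (K-1) := Nat.mul_lt_mul_of_pos_left h3 hpos
        _ = S * ((L-1) * (L-2).choose (K-1)) := by ring
    rw [h1, h2] at h4
    have hKpos : 0 < K := by omega
    calc (L-1) * S.choose K = (L-1) * S.choose K := rfl
      _ < S * (L-1).choose K := by
        have := Nat.lt_of_mul_lt_mul_right (a := K)
          (by calc (L-1) * S.choose K * K = (L-1) * (S.choose K * K) := by ring
                _ < S * ((L-1).choose K * K) := h4
                _ = S * (L-1).choose K * K := by ring)
        exact this
  unfold betaC
  have : ((L:ℤ) - 1) = ((L - 1 : ℕ) : ℤ) := by push_cast [Nat.cast_sub (by omega : 1 ≤ L)]; ring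
  rw [this]
  have := hnat
  zify at this ⊢
  nlinarith [this]

lemma alphaC_pos {L S K : ℕ} (hL : 3 ≤ L) (hK : 2 ≤ K) (hKS : K ≤ S) (hS : S ≤ L - 2) :
    0 < alphaC L S K := by
  unfold alphaC
  have hb : (S.choose K : ℤ) ≤ ((L-1).choose K : ℤ) := by
    exact_mod_cast Nat.choose_le_choose K (by omega)
  have hc : (1:ℤ) ≤ (S.choose K : ℤ) := by exact_mod_cast Nat.choose_pos hKS
  have hSK : (K:ℤ) ≤ (S:ℤ) := by exact_mod_cast hKS
  nlinarith [hSK, hb, hc, (by exact_mod_cast Nat.zero_le S : (0:ℤ) ≤ S)]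

lemma muSet_finite (L : ℕ) (μ : Finset (Fin L) → ℝ) (K : ℕ) :
    {x : ℝ | ∃ 𝒦 : Finset (Fin L), 𝒦.card = K ∧ μ 𝒦 = x}.Finite :=
  Set.Finite.subset (Set.finite_range μ) (by rintro x ⟨𝒦, _, rfl⟩; exact ⟨𝒦, rfl⟩)

lemma exists_card_eq {L K : ℕ} (hK : K ≤ L) : ∃ 𝒦 : Finset (Fin L), 𝒦.card = K := by
  obtain ⟨t, -, ht⟩ := Finset.exists_subset_card_eq
    (show K ≤ (Finset.univ : Finset (Fin L)).card by simpa using hK)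
  exact ⟨t, ht⟩

lemma muMin_le {L : ℕ} (μ : Finset (Fin L) → ℝ) {K : ℕ} {𝒦 : Finset (Fin L)}
    (h : 𝒦.card = K) : muMin L μ K ≤ μ 𝒦 :=
  csInf_le (muSet_finite L μ K).bddBelow ⟨𝒦, h, rfl⟩

lemma le_muMax {L : ℕ} (μ : Finset (Fin L) → ℝ) {K : ℕ} {𝒦 : Finset (Fin L)}
    (h : 𝒦.card = K) : μ 𝒦 ≤ muMax L μ K :=
  le_csSup (muSet_finite L μ K).bddAbove ⟨𝒦, h, rfl⟩

lemma muMin_le_muMax {L : ℕ} (μ : Finset (Fin L) → ℝ) {K : ℕ} (hK : K ≤ L) :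
    muMin L μ K ≤ muMax L μ K := by
  obtain ⟨𝒦, h𝒦⟩ := exists_card_eq (L := L) hK
  exact (muMin_le μ h𝒦).trans (le_muMax μ h𝒦)

/-- The set appearing in the ABCMI condition, as a finset image. -/
lemma ratioSet_eq (L K : ℕ) :
    {x : ℝ | ∃ S : ℕ, K ≤ S ∧ S ≤ L - 2 ∧
        x = (betaC L S K : ℝ) / (alphaC L S K : ℝ)}
      = ↑((Finset.Icc K (L-2)).image
          (fun S => (betaC L S K : ℝ) / (alphaC L S K : ℝ))) := by
  ext x
  simp only [Set.mem_setOf_eq, Finset.coe_image, Set.mem_image, Finset.mem_coe,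
    Finset.mem_Icc]
  constructor
  · rintro ⟨S, h1, h2, rfl⟩; exact ⟨S, ⟨h1, h2⟩, rfl⟩
  · rintro ⟨S, ⟨h1, h2⟩, rfl⟩; exact ⟨S, h1, h2, rfl⟩

lemma ratio_facts {L K : ℕ} (hL : 3 ≤ L) (hK : 2 ≤ K) (hK2 : K ≤ L - 2) :
    (0 < sInf {x : ℝ | ∃ S : ℕ, K ≤ S ∧ S ≤ L - 2 ∧
        x = (betaC L S K : ℝ) / (alphaC L S K : ℝ)}) ∧
    (∀ S : ℕ, K ≤ S → S ≤ L - 2 →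
      sInf {x : ℝ | ∃ S : ℕ, K ≤ S ∧ S ≤ L - 2 ∧
        x = (betaC L S K : ℝ) / (alphaC L S K : ℝ)}
        ≤ (betaC L S K : ℝ) / (alphaC L S K : ℝ)) := by
  rw [ratioSet_eq]
  set F := (Finset.Icc K (L-2)).image
      (fun S => (betaC L S K : ℝ) / (alphaC L S K : ℝ)) with hF
  have hne : F.Nonempty := by
    refine ⟨_, Finset.mem_image.2 ⟨K, ?_, rfl⟩⟩
    simp [Finset.mem_Icc, hK2]
  constructor
  · have hmem := hne.csInf_mem
    rw [Finset.mem_image] at hmem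
    obtain ⟨S, hS, hSeq⟩ := hmem
    rw [Finset.mem_Icc] at hS
    rw [← hSeq]
    exact div_pos (by exact_mod_cast betaC_pos hL hK hS.1 hS.2)
      (by exact_mod_cast alphaC_pos hL hK hS.1 hS.2)
  · intro S h1 h2
    exact csInf_le (Finset.bddBelow F)
      (Finset.mem_image.2 ⟨S, Finset.mem_Icc.2 ⟨h1, h2⟩, rfl⟩)

/-- Coefficient of `μ 𝒦` in `∑ i ∈ 𝒮, r i`. -/
noncomputable def cJ (L : ℕ) (𝒮 𝒦 : Finset (Fin L)) : ℝ :=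
  ((𝒦 ∩ 𝒮).card : ℝ) - (𝒮.card : ℝ) * ((𝒦.card : ℝ) - 1) / ((L:ℝ) - 1)

/-- Coefficient of `μ 𝒦` in `∑ i ∈ 𝒮, r i - ∑ ∅≠𝒦⊆𝒮, μ 𝒦`. -/
noncomputable def dC (L : ℕ) (𝒮 𝒦 : Finset (Fin L)) : ℝ :=
  cJ L 𝒮 𝒦 - (if 𝒦 ⊆ 𝒮 then 1 else 0)

lemma sumJ {L : ℕ} (hL : 3 ≤ L) (μ : Finset (Fin L) → ℝ) (𝒮 𝒦 : Finset (Fin L)) :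
    ∑ i ∈ 𝒮, J L μ i 𝒦 = cJ L 𝒮 𝒦 * μ 𝒦 := by
  have hL1 : ((L:ℝ) - 1) ≠ 0 := by
    have : (3:ℝ) ≤ L := by exact_mod_cast hL
    linarith
  unfold J
  rw [Finset.sum_ite, Finset.sum_const, Finset.sum_const]
  have h1 : 𝒮.filter (· ∈ 𝒦) = 𝒮 ∩ 𝒦 := Finset.filter_mem_eq_inter
  have hcard : (𝒮.filter (· ∈ 𝒦)).card + (𝒮.filter (fun i => ¬ i ∈ 𝒦)).card = 𝒮.card :=
    Finset.card_filter_add_card_filter_not _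
  have hle : (𝒮 ∩ 𝒦).card ≤ 𝒮.card := Finset.card_le_card Finset.inter_subset_left
  have h2 : (𝒮.filter (fun i => ¬ i ∈ 𝒦)).card = 𝒮.card - (𝒮 ∩ 𝒦).card := by
    rw [h1] at hcard; omega
  rw [h1, h2]
  have h3 : ((𝒮.card - (𝒮 ∩ 𝒦).card : ℕ) : ℝ) = (𝒮.card : ℝ) - ((𝒮 ∩ 𝒦).card : ℝ) := by
    push_cast [Nat.cast_sub hle]; ring
  unfold cJ
  rw [nsmul_eq_mul, nsmul_eq_mul, h3, Finset.inter_comm 𝒦 𝒮]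
  field_simp
  ring

/-- Decomposition of the slack as a single sum over nonempty proper subsets. -/
lemma decomp {L : ℕ} (hL : 3 ≤ L) (μ : Finset (Fin L) → ℝ) (𝒮 : Finset (Fin L))
    (hS : 𝒮 ≠ Finset.univ) :
    ∑ i ∈ 𝒮, r L μ i - ∑ 𝒦 ∈ 𝒮.powerset.filter (fun 𝒦 => 𝒦 ≠ ∅), μ 𝒦
      = ∑ 𝒦 ∈ Finset.univ.filter
          (fun 𝒦 : Finset (Fin L) => 𝒦 ≠ ∅ ∧ 𝒦 ≠ Finset.univ), dC L 𝒮 𝒦 * μ 𝒦 := by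
  set A := Finset.univ.filter
      (fun 𝒦 : Finset (Fin L) => 𝒦 ≠ ∅ ∧ 𝒦 ≠ Finset.univ) with hA
  have h1 : ∑ i ∈ 𝒮, r L μ i = ∑ 𝒦 ∈ A, cJ L 𝒮 𝒦 * μ 𝒦 := by
    unfold r
    rw [Finset.sum_comm]
    exact Finset.sum_congr rfl fun 𝒦 _ => sumJ hL μ 𝒮 𝒦
  have h2 : 𝒮.powerset.filter (fun 𝒦 => 𝒦 ≠ ∅) = A.filter (fun 𝒦 => 𝒦 ⊆ 𝒮) := by
    ext 𝒦
    simp only [Finset.mem_filter, Finset.mem_powerset, hA, Finset.mem_univ, true_and]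
    constructor
    · rintro ⟨hsub, hne⟩
      exact ⟨⟨hne, fun h => hS (Finset.univ_subset_iff.mp (h ▸ hsub))⟩, hsub⟩
    · rintro ⟨⟨hne, -⟩, hsub⟩; exact ⟨hsub, hne⟩
  have h3 : ∑ 𝒦 ∈ 𝒮.powerset.filter (fun 𝒦 => 𝒦 ≠ ∅), μ 𝒦
      = ∑ 𝒦 ∈ A, (if 𝒦 ⊆ 𝒮 then (1:ℝ) else 0) * μ 𝒦 := by
    rw [h2, Finset.sum_filter]
    exact Finset.sum_congr rfl fun 𝒦 _ => by split <;> simp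
  rw [h1, h3, ← Finset.sum_sub_distrib]
  exact Finset.sum_congr rfl fun 𝒦 _ => by unfold dC; ring

lemma filter_notmem_eq {L K : ℕ} (i : Fin L) :
    (Finset.powersetCard K (Finset.univ : Finset (Fin L))).filter (fun 𝒦 => i ∉ 𝒦)
      = Finset.powersetCard K (Finset.univ.erase i) := by
  ext 𝒦
  simp only [Finset.mem_filter, Finset.mem_powersetCard, Finset.subset_erase,
    Finset.subset_univ, true_and]
  tauto

lemma card_filter_notmem {L K : ℕ} (i : Fin L) :
    ((Finset.powersetCard K (Finset.univ : Finset (Fin L))).filter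
      (fun 𝒦 => i ∉ 𝒦)).card = (L-1).choose K := by
  rw [filter_notmem_eq, Finset.card_powersetCard, Finset.card_erase_of_mem (Finset.mem_univ i),
    Finset.card_univ, Fintype.card_fin]

lemma card_filter_mem {L K : ℕ} (hL : 1 ≤ L) (hK : 1 ≤ K) (i : Fin L) :
    ((Finset.powersetCard K (Finset.univ : Finset (Fin L))).filter
      (fun 𝒦 => i ∈ 𝒦)).card = (L-1).choose (K-1) := by
  have hcard := Finset.card_filter_add_card_filter_not
    (s := Finset.powersetCard K (Finset.univ : Finset (Fin L))) (p := fun 𝒦 => i ∈ 𝒦)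
  rw [card_filter_notmem] at hcard
  rw [Finset.card_powersetCard, Finset.card_univ, Fintype.card_fin] at hcard
  have := pascal' hL hK
  omega

lemma inter_card_eq_sum {L : ℕ} (𝒮 𝒦 : Finset (Fin L)) :
    (𝒦 ∩ 𝒮).card = ∑ i ∈ 𝒮, if i ∈ 𝒦 then 1 else 0 := by
  rw [← Finset.card_filter, Finset.inter_comm, ← Finset.filter_mem_eq_inter]

lemma sdiff_card_eq_sum {L : ℕ} (𝒮 𝒦 : Finset (Fin L)) :
    (𝒮 \ 𝒦).card = ∑ i ∈ 𝒮, if i ∉ 𝒦 then 1 else 0 := by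
  rw [← Finset.card_filter, Finset.sdiff_eq_filter]

lemma sum_inter_card {L K : ℕ} (hL : 1 ≤ L) (hK : 1 ≤ K) (𝒮 : Finset (Fin L)) :
    ∑ 𝒦 ∈ Finset.powersetCard K (Finset.univ : Finset (Fin L)), (𝒦 ∩ 𝒮).card
      = 𝒮.card * (L-1).choose (K-1) := by
  simp_rw [inter_card_eq_sum]
  rw [Finset.sum_comm]
  simp only [← Finset.card_filter]
  simp [card_filter_mem hL hK]

lemma sum_sdiff_card {L K : ℕ} (𝒮 : Finset (Fin L)) :
    ∑ 𝒦 ∈ Finset.powersetCard K (Finset.univ : Finset (Fin L)), (𝒮 \ 𝒦).card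
      = 𝒮.card * (L-1).choose K := by
  simp_rw [sdiff_card_eq_sum]
  rw [Finset.sum_comm]
  simp only [← Finset.card_filter]
  simp [card_filter_notmem]

lemma filter_subset_eq {L K : ℕ} (𝒮 : Finset (Fin L)) :
    (Finset.powersetCard K (Finset.univ : Finset (Fin L))).filter (fun 𝒦 => 𝒦 ⊆ 𝒮)
      = Finset.powersetCard K 𝒮 := by
  ext 𝒦
  simp only [Finset.mem_filter, Finset.mem_powersetCard, Finset.subset_univ, true_and]
  tauto

set_option maxHeartbeats 2000000 in
lemma fiber_nonneg {L : ℕ} (hL : 3 ≤ L) (μ : Finset (Fin L) → ℝ) (habcmi : ABCMI L μ)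
    (𝒮 : Finset (Fin L)) (hS2 : 𝒮.card ≤ L - 2)
    (K : ℕ) (hK1 : 1 ≤ K) (hK2 : K ≤ L - 1) :
    0 ≤ ∑ 𝒦 ∈ Finset.powersetCard K (Finset.univ : Finset (Fin L)), dC L 𝒮 𝒦 * μ 𝒦 := by
  have hLR : (3:ℝ) ≤ (L:ℝ) := by exact_mod_cast hL
  have hL1 : (0:ℝ) < (L:ℝ) - 1 := by linarith
  set F := Finset.powersetCard K (Finset.univ : Finset (Fin L)) with hF
  have hmemF : ∀ 𝒦 ∈ F, 𝒦.card = K := fun 𝒦 h => Finset.mem_powersetCard_univ.mp h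
  clear_value F
  have hmcard : ∀ 𝒦 : Finset (Fin L), (𝒦 ∩ 𝒮).card ≤ 𝒮.card :=
    fun 𝒦 => Finset.card_le_card Finset.inter_subset_right
  rcases eq_or_lt_of_le hK1 with hK1' | hKge2
  · -- K = 1 : every coefficient vanishes
    refine le_of_eq (Finset.sum_eq_zero fun 𝒦 h𝒦 => ?_).symm
    have hc : 𝒦.card = 1 := by rw [hmemF 𝒦 h𝒦, ← hK1']
    have hKR : ((𝒦.card : ℕ) : ℝ) = 1 := by rw [hc]; norm_num
    unfold dC cJ
    rw [hKR]
    by_cases h : 𝒦 ⊆ 𝒮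
    · rw [if_pos h, Finset.inter_eq_left.mpr h, hc]
      norm_num
    · have hne : 𝒦 ∩ 𝒮 ≠ 𝒦 := by
        intro he
        exact h (by rw [← he]; exact Finset.inter_subset_right)
      have hlt : (𝒦 ∩ 𝒮).card = 0 := by
        have hle : (𝒦 ∩ 𝒮).card ≤ 1 := hc ▸ Finset.card_le_card Finset.inter_subset_left
        rcases Nat.lt_or_ge (𝒦 ∩ 𝒮).card 1 with h' | h'
        · omega
        · exact absurd (Finset.eq_of_subset_of_card_le Finset.inter_subset_left (by omega))
            hne
      rw [if_neg h, hlt]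
      norm_num
  · -- 2 ≤ K : the main case
    have hKge2' : 2 ≤ K := hKge2
    set S := 𝒮.card with hScard
    clear_value S
    set SR : ℝ := (S : ℝ) with hSR
    set KR : ℝ := (K : ℝ) with hKR
    set LR : ℝ := (L : ℝ) with hLRdef
    set a : ℝ := ((L-1).choose (K-1) : ℝ) with ha
    set b : ℝ := ((L-1).choose K : ℝ) with hb
    set c : ℝ := (S.choose K : ℝ) with hc
    set αR : ℝ := SR * b - (SR - KR) * c with hαR
    set βR : ℝ := SR * b - (LR - 1) * c with hβR
    set P : ℝ := muMin L μ K with hP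
    set Q : ℝ := muMax L μ K with hQdef
    clear_value SR KR LR a b c αR βR P Q
    have hSR2 : SR ≤ LR - 2 := by
      rw [hSR, hLRdef]
      have : (S : ℝ) ≤ ((L - 2 : ℕ) : ℝ) := by exact_mod_cast hS2
      rw [Nat.cast_sub (by omega)] at this
      push_cast at this ⊢
      linarith
    have hSRnn : 0 ≤ SR := by rw [hSR]; positivity
    have hKR2 : (2:ℝ) ≤ KR := by rw [hKR]; exact_mod_cast hKge2'
    have hKRle : KR ≤ LR - 1 := by
      rw [hKR, hLRdef]
      have : (K : ℝ) ≤ ((L - 1 : ℕ) : ℝ) := by exact_mod_cast hK2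
      rw [Nat.cast_sub (by omega)] at this
      push_cast at this ⊢
      linarith
    have hPQ : P ≤ Q := by rw [hP, hQdef]; exact muMin_le_muMax μ (by omega)
    -- key inequalities from the ABCMI condition
    have hmain : 0 ≤ P ∧ (KR - 1) * (Q - P) * αR ≤ P * βR := by
      rcases eq_or_lt_of_le hK2 with hKL | hKL'
      · -- K = L - 1
        have hQ1 : Q ≤ P * (1 + 1 / (LR - 2)) := by
          rw [hQdef, hP, hKL, hLRdef]; exact habcmi.1
        have hL2 : (0:ℝ) < LR - 2 := by linarith
        have hQ' : (LR - 2) * (Q - P) ≤ P := by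
          have h1 := mul_le_mul_of_nonneg_left (sub_le_sub_right hQ1 P) hL2.le
          calc (LR - 2) * (Q - P) ≤ (LR - 2) * (P * (1 + 1/(LR - 2)) - P) := h1
            _ = P := by field_simp; ring
        have hP0 : 0 ≤ P := by
          nlinarith [mul_nonneg hL2.le (sub_nonneg.2 hPQ)]
        refine ⟨hP0, ?_⟩
        have hc0 : c = 0 := by
          rw [hc, Nat.choose_eq_zero_of_lt (by omega : S < K), Nat.cast_zero]
        have hb1 : b = 1 := by rw [hb, hKL, Nat.choose_self, Nat.cast_one]
        have hKRL : KR = LR - 1 := by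
          rw [hKR, hKL, hLRdef, Nat.cast_sub (by omega)]
          push_cast; ring
        rw [hαR, hβR, hc0, hb1, hKRL]
        nlinarith [mul_le_mul_of_nonneg_right hQ' hSRnn]
      · -- K ≤ L - 2
        have hKL2 : K ≤ L - 2 := by omega
        obtain ⟨hIpos, hIle⟩ := ratio_facts hL hKge2' hKL2
        set I : ℝ := sInf {x : ℝ | ∃ S : ℕ, K ≤ S ∧ S ≤ L - 2 ∧
          x = (betaC L S K : ℝ) / (alphaC L S K : ℝ)} with hI
        have hQ1 : Q ≤ P * (1 + (1 / (KR - 1)) * I) := by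
          rw [hQdef, hP, hKR]; exact habcmi.2 K hKge2' hKL2
        have hK1R : (0:ℝ) < KR - 1 := by linarith
        have hQ' : (KR - 1) * (Q - P) ≤ P * I := by
          have h1 := mul_le_mul_of_nonneg_left (sub_le_sub_right hQ1 P) hK1R.le
          calc (KR - 1) * (Q - P) ≤ (KR - 1) * (P * (1 + (1/(KR - 1)) * I) - P) := h1
            _ = P * I := by field_simp; ring
        have hP0 : 0 ≤ P := by
          have h0 : 0 ≤ P * I :=
            le_trans (mul_nonneg hK1R.le (sub_nonneg.2 hPQ)) hQ'
          exact le_of_mul_le_mul_right (by simpa using h0) hIpos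
        refine ⟨hP0, ?_⟩
        rcases le_or_gt K S with hKS | hSK
        · -- K ≤ S : use the ratio at S itself
          have hIleS := hIle S hKS hS2
          have hαcast : ((alphaC L S K : ℤ) : ℝ) = αR := by
            rw [hαR, hSR, hKR, hb, hc]; unfold alphaC; push_cast; ring
          have hβcast : ((betaC L S K : ℤ) : ℝ) = βR := by
            rw [hβR, hSR, hLRdef, hb, hc]; unfold betaC; push_cast; ring
          have hαpos : (0:ℝ) < αR := by
            rw [← hαcast]; exact_mod_cast alphaC_pos hL hKge2' hKS hS2
          have hIα : I * αR ≤ βR := by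
            have := mul_le_mul_of_nonneg_right hIleS hαpos.le
            rwa [hαcast, hβcast, div_mul_cancel₀ _ hαpos.ne'] at this
          calc (KR - 1) * (Q - P) * αR ≤ (P * I) * αR :=
                mul_le_mul_of_nonneg_right hQ' hαpos.le
            _ = P * (I * αR) := by ring
            _ ≤ P * βR := mul_le_mul_of_nonneg_left hIα hP0
        · -- S < K : the ratio at S' = K is at most 1
          have hc0 : c = 0 := by
            rw [hc, Nat.choose_eq_zero_of_lt hSK, Nat.cast_zero]
          have hαβ : αR = βR := by rw [hαR, hβR, hc0]; ring
          have hαnn : 0 ≤ αR := by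
            rw [hαR, hc0]
            simp only [mul_zero, sub_zero]
            rw [hSR, hb]
            positivity
          have hαKpos : 0 < alphaC L K K := alphaC_pos hL hKge2' le_rfl hKL2
          have hβαK : betaC L K K ≤ alphaC L K K := by
            unfold alphaC betaC
            have h1 : (1:ℤ) ≤ (L:ℤ) := by exact_mod_cast (by omega : 1 ≤ L)
            have h2 : (0:ℤ) ≤ ((L:ℤ) - 1) * (K.choose K : ℤ) :=
              mul_nonneg (by linarith) (Int.natCast_nonneg _)
            linarith
          have hIle1 : I ≤ 1 := by
            refine le_trans (hIle K le_rfl hKL2) ?_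
            rw [div_le_one (by exact_mod_cast hαKpos)]
            exact_mod_cast hβαK
          have hPI : P * I ≤ P := by
            calc P * I ≤ P * 1 := mul_le_mul_of_nonneg_left hIle1 hP0
              _ = P := mul_one P
          calc (KR - 1) * (Q - P) * αR ≤ (P * I) * αR :=
                mul_le_mul_of_nonneg_right hQ' hαnn
            _ ≤ P * αR := mul_le_mul_of_nonneg_right hPI hαnn
            _ = P * βR := by rw [hαβ]
    obtain ⟨hP0, hkey⟩ := hmain
    -- the negative-part bound function
    set nb : Finset (Fin L) → ℝ := fun 𝒦 =>
      if 𝒦 ⊆ 𝒮 then 0 else (KR - 1) * (SR - ((𝒦 ∩ 𝒮).card : ℝ)) / (LR - 1) with hnb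
    clear_value nb
    have hnb0 : ∀ 𝒦 ∈ F, 0 ≤ nb 𝒦 := by
      intro 𝒦 h𝒦
      rw [hnb]
      dsimp only
      split
      · exact le_refl 0
      · apply div_nonneg _ hL1.le
        apply mul_nonneg (by linarith)
        have : ((𝒦 ∩ 𝒮).card : ℝ) ≤ SR := by rw [hSR]; exact_mod_cast hmcard 𝒦
        linarith
    -- lower bound on coefficients
    have hdlb : ∀ 𝒦 ∈ F, -(nb 𝒦) ≤ dC L 𝒮 𝒦 := by
      intro 𝒦 h𝒦
      have hcK : 𝒦.card = K := hmemF 𝒦 h𝒦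
      by_cases h : 𝒦 ⊆ 𝒮
      · have hd : dC L 𝒮 𝒦 = (KR - 1) * (LR - 1 - SR) / (LR - 1) := by
          unfold dC cJ
          rw [if_pos h, Finset.inter_eq_left.mpr h, hcK, ← hScard, ← hSR, ← hKR, ← hLRdef]
          field_simp
          ring
        have hnbz : nb 𝒦 = 0 := by rw [hnb]; dsimp only; rw [if_pos h]
        rw [hnbz, hd, neg_zero]
        apply div_nonneg _ hL1.le
        apply mul_nonneg (by linarith) (by linarith)
      · have hkey2 : nb 𝒦 + dC L 𝒮 𝒦 = ((𝒦 ∩ 𝒮).card : ℝ) * (LR - KR) / (LR - 1) := by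
          rw [hnb]
          dsimp only
          rw [if_neg h]
          unfold dC cJ
          rw [if_neg h, hcK, ← hScard, ← hSR, ← hKR, ← hLRdef]
          field_simp
          ring
        have h0 : 0 ≤ ((𝒦 ∩ 𝒮).card : ℝ) * (LR - KR) / (LR - 1) := by
          apply div_nonneg _ hL1.le
          apply mul_nonneg (Nat.cast_nonneg _) (by linarith)
        linarith [hkey2, h0]
    -- per-term lower bound
    have hterm : ∀ 𝒦 ∈ F, dC L 𝒮 𝒦 * P - nb 𝒦 * (Q - P) ≤ dC L 𝒮 𝒦 * μ 𝒦 := by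
      intro 𝒦 h𝒦
      have hμ1 : P ≤ μ 𝒦 := by rw [hP]; exact muMin_le μ (hmemF 𝒦 h𝒦)
      have hμ2 : μ 𝒦 ≤ Q := by rw [hQdef]; exact le_muMax μ (hmemF 𝒦 h𝒦)
      rcases le_or_gt 0 (dC L 𝒮 𝒦) with hd | hd
      · have h1 := mul_le_mul_of_nonneg_left hμ1 hd
        have h2 := mul_nonneg (hnb0 𝒦 h𝒦) (sub_nonneg.2 hPQ)
        linarith
      · have h1 := mul_le_mul_of_nonpos_left hμ2 hd.le
        have h2 := mul_le_mul_of_nonneg_right (hdlb 𝒦 h𝒦) (sub_nonneg.2 hPQ)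
        linarith
    -- counting identities
    have hsum1R : ∑ 𝒦 ∈ F, ((𝒦 ∩ 𝒮).card : ℝ) = SR * a := by
      rw [hSR, ha, hF, hScard]
      exact_mod_cast sum_inter_card (by omega : 1 ≤ L) hK1 𝒮
    have hcardF : ((F.card : ℕ) : ℝ) = a + b := by
      rw [hF, Finset.card_powersetCard, Finset.card_univ, Fintype.card_fin,
        pascal' (by omega : 1 ≤ L) hK1, ha, hb]
      push_cast
      ring
    have hsubcard : (((F.filter (fun 𝒦 => 𝒦 ⊆ 𝒮)).card : ℕ) : ℝ) = c := by
      rw [hF, filter_subset_eq, Finset.card_powersetCard, hc, hScard]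
    have hid : b * KR = a * (LR - KR) := by
      have h := Nat.choose_succ_right_eq (L-1) (K-1)
      rw [show K - 1 + 1 = K by omega, show L - 1 - (K - 1) = L - K by omega] at h
      have hcast : (((L-1).choose K : ℕ) : ℝ) * (K : ℝ)
          = (((L-1).choose (K-1) : ℕ) : ℝ) * ((L:ℝ) - (K:ℝ)) := by
        rw [← Nat.cast_sub (show K ≤ L by omega)]
        exact_mod_cast h
      rw [hb, ha, hKR, hLRdef]
      linarith [hcast]
    have hsumd : ∑ 𝒦 ∈ F, dC L 𝒮 𝒦 = βR / (LR - 1) := by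
      have e3 : ∀ 𝒦 ∈ F, dC L 𝒮 𝒦
          = ((𝒦 ∩ 𝒮).card : ℝ) - SR * (KR - 1) / (LR - 1)
            - (if 𝒦 ⊆ 𝒮 then (1:ℝ) else 0) := by
        intro 𝒦 h𝒦
        unfold dC cJ
        rw [hmemF 𝒦 h𝒦, ← hScard, ← hSR, ← hKR, ← hLRdef]
      rw [Finset.sum_congr rfl e3, Finset.sum_sub_distrib, Finset.sum_sub_distrib,
        Finset.sum_boole, hsum1R, Finset.sum_const, hsubcard, nsmul_eq_mul, hcardF, hβR]
      field_simp
      linear_combination (-SR) * hid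
    have hsumnb : ∑ 𝒦 ∈ F, nb 𝒦 = (KR - 1) * αR / (LR - 1) := by
      have e4 : ∀ 𝒦 ∈ F, nb 𝒦
          = (SR - ((𝒦 ∩ 𝒮).card : ℝ)) * ((KR - 1) / (LR - 1))
            - (if 𝒦 ⊆ 𝒮 then (SR - ((𝒦 ∩ 𝒮).card : ℝ)) * ((KR - 1) / (LR - 1)) else 0) := by
        intro 𝒦 h𝒦
        rw [hnb]
        dsimp only
        split
        · simp
        · ring
      rw [Finset.sum_congr rfl e4, Finset.sum_sub_distrib]
      have p1 : ∑ 𝒦 ∈ F, (SR - ((𝒦 ∩ 𝒮).card : ℝ)) * ((KR - 1) / (LR - 1))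
          = ((a+b) * SR - SR * a) * ((KR - 1) / (LR - 1)) := by
        rw [← Finset.sum_mul]
        congr 1
        rw [Finset.sum_sub_distrib, hsum1R, Finset.sum_const, nsmul_eq_mul, hcardF]
      have p2 : ∑ 𝒦 ∈ F, (if 𝒦 ⊆ 𝒮 then (SR - ((𝒦 ∩ 𝒮).card : ℝ)) * ((KR - 1) / (LR - 1)) else 0)
          = c * ((SR - KR) * ((KR - 1) / (LR - 1))) := by
        rw [← Finset.sum_filter]
        have e5 : ∀ 𝒦 ∈ F.filter (fun 𝒦 => 𝒦 ⊆ 𝒮),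
            (SR - ((𝒦 ∩ 𝒮).card : ℝ)) * ((KR - 1) / (LR - 1))
              = (SR - KR) * ((KR - 1) / (LR - 1)) := by
          intro 𝒦 h𝒦
          rw [Finset.mem_filter] at h𝒦
          rw [Finset.inter_eq_left.mpr h𝒦.2, hmemF 𝒦 h𝒦.1, ← hKR]
        rw [Finset.sum_congr rfl e5, Finset.sum_const, nsmul_eq_mul, hsubcard]
      rw [p1, p2, hαR]
      field_simp
      ring
    -- put everything together
    calc (0:ℝ) ≤ (P * βR - (KR - 1) * (Q - P) * αR) / (LR - 1) :=
          div_nonneg (by linarith [hkey]) hL1.le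
      _ = (βR / (LR - 1)) * P - ((KR - 1) * αR / (LR - 1)) * (Q - P) := by
          field_simp
      _ = ∑ 𝒦 ∈ F, (dC L 𝒮 𝒦 * P - nb 𝒦 * (Q - P)) := by
          rw [Finset.sum_sub_distrib, ← Finset.sum_mul, ← Finset.sum_mul, hsumd, hsumnb]
      _ ≤ ∑ 𝒦 ∈ F, dC L 𝒮 𝒦 * μ 𝒦 := Finset.sum_le_sum hterm

lemma dC_eq_zero {L : ℕ} (hL : 3 ≤ L) (𝒮 : Finset (Fin L)) (hS : 𝒮.card = L - 1)
    (𝒦 : Finset (Fin L)) (h1 : 𝒦 ≠ ∅) (h2 : 𝒦 ≠ Finset.univ) : dC L 𝒮 𝒦 = 0 := by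
  have hLR : (3:ℝ) ≤ (L:ℝ) := by exact_mod_cast hL
  have hL1 : ((L:ℝ) - 1) ≠ 0 := by linarith
  have hSR : ((𝒮.card : ℕ) : ℝ) = (L:ℝ) - 1 := by
    rw [hS, Nat.cast_sub (by omega)]; push_cast; ring
  by_cases h : 𝒦 ⊆ 𝒮
  · unfold dC cJ
    rw [if_pos h, Finset.inter_eq_left.mpr h, hSR]
    field_simp
    ring
  · have hKpos : 1 ≤ 𝒦.card := Finset.card_pos.mpr (Finset.nonempty_of_ne_empty h1)
    have hsd : (𝒦 \ 𝒮).card = 1 := by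
      have hsub : 𝒦 \ 𝒮 ⊆ Finset.univ \ 𝒮 :=
        Finset.sdiff_subset_sdiff (Finset.subset_univ 𝒦) (le_refl 𝒮)
      have hcompl : (Finset.univ \ 𝒮).card = L - 𝒮.card := by
        rw [Finset.card_sdiff_of_subset (Finset.subset_univ _), Finset.card_univ, Fintype.card_fin]
      have hle := Finset.card_le_card hsub
      have hne : (𝒦 \ 𝒮).Nonempty := Finset.sdiff_nonempty.mpr h
      have h1' : 1 ≤ (𝒦 \ 𝒮).card := Finset.card_pos.mpr hne
      omega
    have hm : (𝒦 ∩ 𝒮).card = 𝒦.card - 1 := by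
      have := Finset.card_inter_add_card_sdiff 𝒦 𝒮
      omega
    unfold dC cJ
    rw [if_neg h, hm, hSR, Nat.cast_sub hKpos]
    push_cast
    field_simp
    ring

lemma A_fiber {L K : ℕ} (hK1 : 1 ≤ K) (hK2 : K ≤ L - 1) (hL : 3 ≤ L) :
    (Finset.univ.filter
        (fun 𝒦 : Finset (Fin L) => 𝒦 ≠ ∅ ∧ 𝒦 ≠ Finset.univ)).filter
      (fun 𝒦 => 𝒦.card = K) = Finset.powersetCard K Finset.univ := by
  ext 𝒦
  simp only [Finset.mem_filter, Finset.mem_univ, true_and, Finset.mem_powersetCard_univ]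
  constructor
  · rintro ⟨-, h⟩; exact h
  · intro h
    refine ⟨⟨?_, ?_⟩, h⟩
    · intro he; rw [he, Finset.card_empty] at h; omega
    · intro he; rw [he, Finset.card_univ, Fintype.card_fin] at h; omega

lemma sumA_nonneg {L : ℕ} (hL : 3 ≤ L) (μ : Finset (Fin L) → ℝ) (habcmi : ABCMI L μ)
    (𝒮 : Finset (Fin L)) (hS2 : 𝒮.card ≤ L - 2) :
    0 ≤ ∑ 𝒦 ∈ Finset.univ.filter
        (fun 𝒦 : Finset (Fin L) => 𝒦 ≠ ∅ ∧ 𝒦 ≠ Finset.univ), dC L 𝒮 𝒦 * μ 𝒦 := by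
  have hmaps : ∀ 𝒦 ∈ Finset.univ.filter
      (fun 𝒦 : Finset (Fin L) => 𝒦 ≠ ∅ ∧ 𝒦 ≠ Finset.univ),
      𝒦.card ∈ Finset.Icc 1 (L-1) := by
    intro 𝒦 h𝒦
    rw [Finset.mem_filter] at h𝒦
    rw [Finset.mem_Icc]
    have hpos : 1 ≤ 𝒦.card := Finset.card_pos.mpr (Finset.nonempty_of_ne_empty h𝒦.2.1)
    have hub : 𝒦.card ≤ L := by
      have := Finset.card_le_univ 𝒦
      rwa [Fintype.card_fin] at this
    have hneL : 𝒦.card ≠ L := by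
      intro hcard
      exact h𝒦.2.2 (Finset.eq_univ_of_card 𝒦 (by rw [hcard, Fintype.card_fin]))
    omega
  rw [← Finset.sum_fiberwise_of_maps_to hmaps (fun 𝒦 => dC L 𝒮 𝒦 * μ 𝒦)]
  apply Finset.sum_nonneg
  intro K hK
  rw [Finset.mem_Icc] at hK
  rw [A_fiber hK.1 hK.2 hL]
  exact fiber_nonneg hL μ habcmi 𝒮 hS2 K hK.1 hK.2

theorem stmt0 (L : ℕ) (hL : 3 ≤ L) (μ : Finset (Fin L) → ℝ)
    (hsingle : ∀ i : Fin L, 0 ≤ μ {i}) (habcmi : ABCMI L μ) :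
    (∀ i : Fin L, 0 ≤ r L μ i) ∧
    (∀ 𝒮 : Finset (Fin L), 1 ≤ 𝒮.card → 𝒮.card ≤ L - 2 →
      ∑ 𝒦 ∈ 𝒮.powerset.filter (fun 𝒦 => 𝒦 ≠ ∅), μ 𝒦 ≤ ∑ i ∈ 𝒮, r L μ i) ∧
    (∀ 𝒮 : Finset (Fin L), 𝒮.card = L - 1 →
      ∑ i ∈ 𝒮, r L μ i = ∑ 𝒦 ∈ 𝒮.powerset.filter (fun 𝒦 => 𝒦 ≠ ∅), μ 𝒦) := by
  have hb : ∀ 𝒮 : Finset (Fin L), 1 ≤ 𝒮.card → 𝒮.card ≤ L - 2 →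
      ∑ 𝒦 ∈ 𝒮.powerset.filter (fun 𝒦 => 𝒦 ≠ ∅), μ 𝒦 ≤ ∑ i ∈ 𝒮, r L μ i := by
    intro 𝒮 h1 h2
    have hSne : 𝒮 ≠ Finset.univ := by
      intro he
      rw [he, Finset.card_univ, Fintype.card_fin] at h2
      omega
    have hd := decomp hL μ 𝒮 hSne
    have h0 := sumA_nonneg hL μ habcmi 𝒮 h2
    linarith
  have hc : ∀ 𝒮 : Finset (Fin L), 𝒮.card = L - 1 →
      ∑ i ∈ 𝒮, r L μ i = ∑ 𝒦 ∈ 𝒮.powerset.filter (fun 𝒦 => 𝒦 ≠ ∅), μ 𝒦 := by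
    intro 𝒮 hcard
    have hSne : 𝒮 ≠ Finset.univ := by
      intro he
      rw [he, Finset.card_univ, Fintype.card_fin] at hcard
      omega
    have hd := decomp hL μ 𝒮 hSne
    have hz : ∑ 𝒦 ∈ Finset.univ.filter
        (fun 𝒦 : Finset (Fin L) => 𝒦 ≠ ∅ ∧ 𝒦 ≠ Finset.univ), dC L 𝒮 𝒦 * μ 𝒦 = 0 := by
      apply Finset.sum_eq_zero
      intro 𝒦 h𝒦
      rw [Finset.mem_filter] at h𝒦
      rw [dC_eq_zero hL 𝒮 hcard 𝒦 h𝒦.2.1 h𝒦.2.2]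
      ring
    linarith
  refine ⟨?_, hb, hc⟩
  intro i
  have h := hb {i} (by simp) (by simp; omega)
  have hps : ∑ 𝒦 ∈ ({i} : Finset (Fin L)).powerset.filter (fun 𝒦 => 𝒦 ≠ ∅), μ 𝒦
      = μ {i} := by
    rw [show ({i} : Finset (Fin L)).powerset.filter (fun 𝒦 => 𝒦 ≠ ∅) = {{i}} by
      ext 𝒦
      simp only [Finset.mem_filter, Finset.mem_powerset, Finset.mem_singleton,
        Finset.subset_singleton_iff]
      constructor
      · rintro ⟨h1 | h1, h2⟩
        · exact absurd h1 h2
        · exact h1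
      · rintro rfl
        exact ⟨Or.inr rfl, Finset.singleton_ne_empty i⟩]
    exact Finset.sum_singleton _ _
  rw [hps, Finset.sum_singleton] at h
  exact le_trans (hsingle i) h
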